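/- Assume μ ≥ 1, Γ has at least one edge, and Γ has at least one pair of distinct non-adjacent vertices. Let s = (λ − μ − √((λ−μ)² + 4(k−μ)))/2, y = A − s·I, and let f be the natural number with (f : ℝ) = (v − 1 − (2k + (v−1)(λ−μ))/√((λ−μ)² + 4(k−μ)))/2, assuming such f exists. If V is not the union of f + 1 cliques of Γ, then the finite point set P(V) ⊆ ℝ^V has affine dimension f and cannot be written as a union of f + 1 subsets each of diameter strictly smaller than the diameter of P(V); that is, P(V) is a counterexample to Borsuk's conjecture in dimension f. -/

import Mathlib

open scoped RealInnerProductSpace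

/-- The `i`-th column of `y = A - s·I`, where `A` is the real adjacency matrix of `G`,
viewed as a point of Euclidean space `ℝ^V`. -/
noncomputable def srgCol {V : Type*} [Fintype V] [DecidableEq V]
    (G : SimpleGraph V) [DecidableRel G.Adj] (s : ℝ) (i : V) : EuclideanSpace ℝ V :=
  (WithLp.equiv 2 (V → ℝ)).symm fun j => (G.adjMatrix ℝ - s • (1 : Matrix V V ℝ)) j i


/-- The affine dimension of a point set: the finrank of the direction of its affine span. -/
noncomputable def adim {V : Type*} [Fintype V] (X : Set (EuclideanSpace ℝ V)) : ℕ :=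
  Module.finrank ℝ (affineSpan ℝ X).direction

open Matrix Finset

lemma vectorSpan_eq_span_of_shift {E ι : Type*} [Fintype ι] [Nonempty ι]
    [AddCommGroup E] [Module ℝ E]
    (p q : ι → E) (w : E) (hpq : ∀ i, p i = q i + w) (hq : ∑ i, q i = 0) :
    vectorSpan ℝ (Set.range p) = Submodule.span ℝ (Set.range q) := by
  apply le_antisymm
  · rw [vectorSpan_def, Submodule.span_le]
    rintro x hx
    rw [Set.mem_vsub] at hx
    obtain ⟨a, ⟨i, rfl⟩, b, ⟨j, rfl⟩, rfl⟩ := hx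
    have : p i -ᵥ p j = q i - q j := by
      rw [vsub_eq_sub, hpq i, hpq j]; abel
    rw [this]
    exact sub_mem (Submodule.subset_span ⟨i, rfl⟩) (Submodule.subset_span ⟨j, rfl⟩)
  · rw [Submodule.span_le]
    rintro x ⟨i, rfl⟩
    have hcard : (0 : ℝ) < (Fintype.card ι : ℝ) := by
      exact_mod_cast Fintype.card_pos
    have hsum : ∑ j, (p i - p j) = (Fintype.card ι : ℝ) • q i := by
      have : ∀ j, p i - p j = q i - q j := by
        intro j; rw [hpq i, hpq j]; abel
      simp only [this, Finset.sum_sub_distrib, hq, sub_zero, Finset.sum_const, card_univ,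
        ← Nat.cast_smul_eq_nsmul ℝ]
    have : q i = ((Fintype.card ι : ℝ))⁻¹ • ∑ j, (p i - p j) := by
      rw [hsum, smul_smul, inv_mul_cancel₀ hcard.ne', one_smul]
    rw [this]
    refine Submodule.smul_mem _ _ (Submodule.sum_mem _ fun j _ => ?_)
    have := vsub_mem_vectorSpan ℝ (Set.mem_range_self i) (Set.mem_range_self j) (s := Set.range p)
    rwa [vsub_eq_sub] at this

lemma finrank_span_range_transpose_eq {V : Type*} [Fintype V] [DecidableEq V]
    (N : Matrix V V ℝ) (d : ℝ) (hd : d ≠ 0) (hN : N * N = d • N) :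
    (Module.finrank ℝ (Submodule.span ℝ (Set.range Nᵀ)) : ℝ) = d⁻¹ * N.trace := by
  set P : Matrix V V ℝ := d⁻¹ • N with hP
  have hPP : P * P = P := by
    rw [hP, Matrix.smul_mul, Matrix.mul_smul, hN, smul_smul, smul_smul]
    congr 1
    field_simp
  set f := P.mulVecLin with hf
  have hff : f ∘ₗ f = f := by
    rw [hf, ← Matrix.mulVecLin_mul, hPP]
  have hproj : LinearMap.IsProj (LinearMap.range f) f := by
    refine ⟨fun x => LinearMap.mem_range_self f x, ?_⟩
    rintro x ⟨y, rfl⟩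
    calc f (f y) = (f ∘ₗ f) y := rfl
    _ = f y := by rw [hff]
  have htr := hproj.trace
  have htrP : LinearMap.trace ℝ (V → ℝ) f = Matrix.trace P := by
    rw [LinearMap.trace_eq_matrix_trace ℝ (Pi.basisFun ℝ V) f,
      LinearMap.toMatrix_eq_toMatrix']
    congr 1
    rw [hf, ← Matrix.toLin'_apply', LinearMap.toMatrix'_toLin']
  have hrange : LinearMap.range f = Submodule.span ℝ (Set.range Nᵀ) := by
    rw [hf, Matrix.range_mulVecLin]
    apply le_antisymm <;> rw [Submodule.span_le] <;> rintro x ⟨i, rfl⟩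
    · have : Pᵀ i = d⁻¹ • Nᵀ i := by
        rw [hP, Matrix.transpose_smul]; rfl
      show Pᵀ i ∈ _
      rw [this]
      exact Submodule.smul_mem _ _ (Submodule.subset_span ⟨i, rfl⟩)
    · have : Nᵀ i = d • Pᵀ i := by
        rw [hP, Matrix.transpose_smul]
        show Nᵀ i = d • (d⁻¹ • Nᵀ i)
        rw [smul_smul, mul_inv_cancel₀ hd, one_smul]
      rw [this]
      exact Submodule.smul_mem _ _ (Submodule.subset_span ⟨i, rfl⟩)
  rw [← hrange, ← htr, htrP, hP, Matrix.trace_smul]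
  rfl

set_option maxHeartbeats 2000000 in
theorem stmt_16 {V : Type*} [Fintype V] [DecidableEq V]
    (G : SimpleGraph V) [DecidableRel G.Adj] (v k l m : ℕ)
    (hG : G.IsSRGWith v k l m) (hm : 1 ≤ m)
    (hedge : ∃ i j : V, G.Adj i j)
    (hnonadj : ∃ i j : V, i ≠ j ∧ ¬G.Adj i j)
    (s : ℝ)
    (hs : s = ((l : ℝ) - m - Real.sqrt (((l : ℝ) - m) ^ 2 + 4 * ((k : ℝ) - m))) / 2)
    (f : ℕ)
    (hf : (f : ℝ) =
      ((v : ℝ) - 1 - (2 * (k : ℝ) + ((v : ℝ) - 1) * ((l : ℝ) - m)) /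
          Real.sqrt (((l : ℝ) - m) ^ 2 + 4 * ((k : ℝ) - m))) / 2)
    (hcl : ¬∃ Q : Fin (f + 1) → Set V,
        (Set.univ : Set V) = ⋃ a, Q a ∧ ∀ a, G.IsClique (Q a)) :
    adim (Set.range (srgCol G s)) = f ∧
    ¬∃ F : Fin (f + 1) → Set (EuclideanSpace ℝ V),
        Set.range (srgCol G s) = ⋃ a, F a ∧
        ∀ a, Metric.diam (F a) < Metric.diam (Set.range (srgCol G s)) := by
  classical
  obtain ⟨i0, j0, hadj0⟩ := hedge
  obtain ⟨i1, j1, hne1, hna1⟩ := hnonadj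
  haveI : Nonempty V := ⟨i0⟩
  have hcard : Fintype.card V = v := hG.card
  have hv0 : 0 < v := hcard ▸ Fintype.card_pos
  set K : ℝ := (k : ℝ) with hK
  set L : ℝ := (l : ℝ) with hL
  set Mu : ℝ := (m : ℝ) with hMu'
  set Vv : ℝ := (v : ℝ) with hVv
  have hVv0 : (0:ℝ) < Vv := by rw [hVv]; exact_mod_cast hv0
  -- basic parameter inequalities
  have hmk : m ≤ k := by
    have h1 := G.card_commonNeighbors_le_degree_left i1 j1
    rw [hG.of_not_adj hne1 hna1, hG.regular i1] at h1
    exact h1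
  have hlk : l < k := by
    have h1 := hadj0.card_commonNeighbors_lt_degree
    rw [hG.of_adj i0 j0 hadj0, hG.regular i0] at h1
    exact h1
  have hkv : k < v := by
    have h1 := G.degree_lt_card_verts i0
    rw [hG.regular i0, hcard] at h1
    exact h1
  have hKMu : Mu ≤ K := by rw [hMu', hK]; exact_mod_cast hmk
  have hLK : L + 1 ≤ K := by rw [hL, hK]; exact_mod_cast hlk
  have hKV : K + 1 ≤ Vv := by rw [hK, hVv]; exact_mod_cast hkv
  -- the discriminant and sqrt
  have hDpos : (0:ℝ) < (L - Mu) ^ 2 + 4 * (K - Mu) := by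
    nlinarith [sq_nonneg (L - Mu + 1)]
  set d : ℝ := Real.sqrt ((L - Mu) ^ 2 + 4 * (K - Mu)) with hd
  have hd2 : d ^ 2 = (L - Mu) ^ 2 + 4 * (K - Mu) := Real.sq_sqrt hDpos.le
  have hdpos : 0 < d := Real.sqrt_pos.mpr hDpos
  have hs' : s = ((L - Mu) - d) / 2 := hs
  set r : ℝ := ((L - Mu) + d) / 2 with hr
  have hsum : r + s = L - Mu := by rw [hr, hs']; ring
  have hdiff : r - s = d := by rw [hr, hs']; ring
  have hprod : r * s = -(K - Mu) := by rw [hr, hs']; linear_combination -hd2/4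
  have hquad : s ^ 2 = (L - Mu) * s + (K - Mu) := by
    rw [hs']; linear_combination hd2/4
  have hsneg : s < 0 := by
    rcases lt_or_eq_of_le hKMu with h | h
    · have : L - Mu < d := by
        nlinarith [Real.sqrt_nonneg ((L - Mu) ^ 2 + 4 * (K - Mu))]
      rw [hs']; linarith
    · have hLM : L - Mu ≤ -1 := by rw [h]; linarith
      rw [hs']; linarith
  have hKs : 0 < K - s := by linarith
  -- the SRG parameter identity over ℝ
  have hparam : K * (K - L - 1) = (Vv - K - 1) * Mu := by
    have hpc := SimpleGraph.IsSRGWith.param_eq G hG hv0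
    have hx : ((k - l - 1 : ℕ) : ℝ) = K - L - 1 := by
      have : k - l - 1 + (l + 1) = k := by omega
      have := congrArg (fun t : ℕ => (t : ℝ)) this
      push_cast at this
      linarith
    have hy : ((v - k - 1 : ℕ) : ℝ) = Vv - K - 1 := by
      have : v - k - 1 + (k + 1) = v := by omega
      have := congrArg (fun t : ℕ => (t : ℝ)) this
      push_cast at this
      linarith
    have := congrArg (fun t : ℕ => (t : ℝ)) hpc
    push_cast at this
    rw [hx, hy] at this
    exact this
  have hvm : Vv * Mu = (K - r) * (K - s) := by linear_combination -hparam + K * hsum - hprod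
  -- matrices
  set A : Matrix V V ℝ := G.adjMatrix ℝ with hA
  set J : Matrix V V ℝ := Matrix.of fun _ _ => (1:ℝ) with hJ
  set M : Matrix V V ℝ := A - s • 1 with hM
  set c : ℝ := (K - s) / Vv with hc
  set N : Matrix V V ℝ := M - c • J with hN
  have hcV : c * Vv = K - s := div_mul_cancel₀ _ hVv0.ne'
  have hCompl : Gᶜ.adjMatrix ℝ = J - 1 - A := by
    ext i j
    by_cases h : i = j
    · subst h; simp [hJ, hA]
    · by_cases ha : G.Adj i j <;>
        simp [hJ, hA, Matrix.one_apply_ne h, SimpleGraph.compl_adj, h, ha]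
  have hA2 : A * A = K • (1 : Matrix V V ℝ) + L • A + Mu • (J - 1 - A) := by
    have := hG.matrix_eq (α := ℝ)
    rw [hCompl, pow_two] at this
    rw [this, hK, hL, hMu']
    simp [Nat.cast_smul_eq_nsmul]
    rfl
  have hAJ : A * J = K • J := by
    ext i j
    rw [SimpleGraph.adjMatrix_mul_apply]
    simp only [hJ, Matrix.of_apply, Matrix.smul_apply, smul_eq_mul, mul_one]
    rw [Finset.sum_const, SimpleGraph.card_neighborFinset_eq_degree, hG.regular i]
    simp [hK]
  have hJsymm : Jᵀ = J := by ext i j; rfl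
  have hAsymm : Aᵀ = A := (G.isSymm_adjMatrix).eq
  have hJA : J * A = K • J := by
    have h0 := congrArg Matrix.transpose hAJ
    rwa [Matrix.transpose_mul, Matrix.transpose_smul, hJsymm, hAsymm] at h0
  have hJJ : J * J = Vv • J := by
    ext i j
    simp only [Matrix.mul_apply, hJ, Matrix.of_apply, mul_one, Matrix.smul_apply,
      smul_eq_mul, Finset.sum_const, card_univ, hcard, hVv]
    simp
  have hMsymm : Mᵀ = M := by
    rw [hM, Matrix.transpose_sub, Matrix.transpose_smul, Matrix.transpose_one, hAsymm]
  have hMJ : M * J = (K - s) • J := by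
    rw [hM, Matrix.sub_mul, Matrix.smul_mul, one_mul, hAJ, ← sub_smul]
  have hJM : J * M = (K - s) • J := by
    rw [hM, Matrix.mul_sub, Matrix.mul_smul, mul_one, hJA, ← sub_smul]
  have hMM : M * M = (K - Mu + s ^ 2) • (1 : Matrix V V ℝ) + d • A + Mu • J := by
    simp only [hM, Matrix.sub_mul, Matrix.mul_sub, Matrix.smul_mul, Matrix.mul_smul,
      smul_smul, one_mul, mul_one]
    rw [hA2]
    have hds : L - Mu - 2 * s = d := by rw [hs']; ring
    match_scalars
    · ring
    · linear_combination hds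
    · ring
  have hNN : N * N = d • N := by
    simp only [hN, Matrix.sub_mul, Matrix.mul_sub, Matrix.smul_mul, Matrix.mul_smul,
      smul_smul]
    rw [hMM, hMJ, hJM, hJJ]
    have hco1 : K - Mu + s ^ 2 + d * s = 0 := by
      linear_combination hquad + 2 * hprod - 2 * s * hr
    have hco2 : Mu - 2 * (c * (K - s)) + c * (c * Vv) + d * c = 0 := by
      have h1 : (Mu - c * c * Vv + d * c) * Vv = 0 := by
        linear_combination hvm + (d - c * Vv - (K - s)) * hcV - (K - s) * hdiff
      have h2 : Mu - c * c * Vv + d * c = 0 :=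
        by
          rcases mul_eq_zero.mp h1 with h | h
          · exact h
          · exact absurd h hVv0.ne'
      linear_combination h2 + 2 * c * hcV
    match_scalars
    · linear_combination hco1
    · ring
    · linear_combination hco2
  have htrN : N.trace = -(s * Vv) - (K - s) := by
    rw [hN, hM, Matrix.trace_sub, Matrix.trace_sub, Matrix.trace_smul, Matrix.trace_smul,
      Matrix.trace_one, SimpleGraph.trace_adjMatrix]
    have htrJ : J.trace = Vv := by
      rw [Matrix.trace]
      simp only [Matrix.diag_apply, hJ, Matrix.of_apply, Finset.sum_const, card_univ,
        hcard, hVv, nsmul_eq_mul, mul_one]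
    rw [htrJ]
    simp only [smul_eq_mul, hcard, hVv]
    push_cast
    rw [← hVv]
    linear_combination -hcV
  -- columns as Euclidean points
  set E := WithLp.linearEquiv 2 ℝ (V → ℝ) with hE
  have hcols : ∀ i, srgCol G s i = E.symm fun j => M j i := fun i => rfl
  set colsN : V → EuclideanSpace ℝ V := fun i => E.symm fun j => N j i with hcolsN
  set w : EuclideanSpace ℝ V := E.symm fun _ => c with hw
  have hshift : ∀ i, srgCol G s i = colsN i + w := by
    intro i
    rw [hcols i, hcolsN, hw]
    rw [← map_add]
    congr 1
    funext j
    simp only [Pi.add_apply, hN, Matrix.sub_apply, Matrix.smul_apply, hJ, Matrix.of_apply,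
      smul_eq_mul, mul_one]
    ring
  have hrowA : ∀ j, ∑ i, A j i = K := by
    intro j
    have h1 : ∑ i, A j i = dotProduct (A j) (fun _ => (1:ℝ)) := by
      simp [dotProduct]
    rw [h1, hA, SimpleGraph.adjMatrix_dotProduct]
    rw [Finset.sum_const, SimpleGraph.card_neighborFinset_eq_degree, hG.regular j]
    simp [hK]
  have hqsum : ∑ i, colsN i = 0 := by
    have h1 : ∑ i, colsN i = E.symm (∑ i, fun j => N j i) := by
      rw [hcolsN, map_sum]
    rw [h1]
    have h2 : (∑ i, fun j => N j i) = (0 : V → ℝ) := by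
      funext j
      rw [Finset.sum_apply]
      have h3 : ∀ i, N j i = M j i - c := by
        intro i
        simp [hN, Matrix.sub_apply, Matrix.smul_apply, hJ]
      have h4 : ∀ i, M j i = A j i - s * (1 : Matrix V V ℝ) j i := by
        intro i
        simp [hM, Matrix.sub_apply, Matrix.smul_apply]
      simp only [h3, h4, Finset.sum_sub_distrib, hrowA]
      rw [Finset.sum_const, card_univ, hcard]
      have h5 : ∑ i, s * (1 : Matrix V V ℝ) j i = s := by
        rw [← Finset.mul_sum]
        simp [Matrix.one_apply]
      rw [h5]
      simp only [Pi.zero_apply, nsmul_eq_mul]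
      rw [← hVv]
      linear_combination -hcV
    rw [h2]
    exact map_zero _
  have hspan : vectorSpan ℝ (Set.range (srgCol G s)) = Submodule.span ℝ (Set.range colsN) :=
    vectorSpan_eq_span_of_shift (srgCol G s) colsN w hshift hqsum
  have hmapE : ⇑(E : EuclideanSpace ℝ V →ₗ[ℝ] (V → ℝ)) ∘ colsN = Nᵀ := by
    funext i
    simp only [Function.comp_apply, LinearEquiv.coe_coe, hcolsN]
    rw [LinearEquiv.apply_symm_apply]
    rfl
  have hmap : (Submodule.span ℝ (Set.range colsN)).map (E : EuclideanSpace ℝ V →ₗ[ℝ] (V → ℝ))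
      = Submodule.span ℝ (Set.range Nᵀ) := by
    rw [Submodule.map_span]
    congr 1
    rw [← Set.range_comp, hmapE]
  have hfr1 : Module.finrank ℝ (vectorSpan ℝ (Set.range (srgCol G s)))
      = Module.finrank ℝ (Submodule.span ℝ (Set.range Nᵀ)) := by
    rw [hspan, ← hmap, LinearEquiv.finrank_map_eq]
  have hfr2 : (Module.finrank ℝ (Submodule.span ℝ (Set.range Nᵀ)) : ℝ) = d⁻¹ * N.trace :=
    finrank_span_range_transpose_eq N d hdpos.ne' hNN
  have hfr3 : d⁻¹ * N.trace = (f : ℝ) := by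
    rw [htrN, hf]
    field_simp
    linear_combination (2 - 2 * Vv) * hs'
  have hpart1 : adim (Set.range (srgCol G s)) = f := by
    have : (Module.finrank ℝ (vectorSpan ℝ (Set.range (srgCol G s))) : ℝ) = (f : ℝ) := by
      rw [hfr1, hfr2, hfr3]
    have h6 := Nat.cast_injective this
    rw [adim, direction_affineSpan]
    exact h6
  -- distances
  have happ : ∀ i p, srgCol G s i p = M p i := fun i p => rfl
  set dn : ℝ := Real.sqrt (2 * (K - Mu + s ^ 2)) with hdn
  have hs2pos : 0 < s ^ 2 := pow_two_pos_of_ne_zero hsneg.ne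
  have hqpos : 0 < K - Mu + s ^ 2 := by linarith
  have hdnpos : 0 < dn := Real.sqrt_pos.mpr (by linarith)
  have hdn2 : dn ^ 2 = 2 * (K - Mu + s ^ 2) := Real.sq_sqrt (by linarith)
  have hMMii : ∀ i, (M * M) i i = (K - Mu + s ^ 2) + Mu := by
    intro i
    rw [hMM]
    simp [Matrix.add_apply, Matrix.smul_apply, Matrix.one_apply_eq, hJ, hA]
  have hMMij : ∀ i j, i ≠ j → (M * M) i j = d * (if G.Adj i j then 1 else 0) + Mu := by
    intro i j h
    rw [hMM]
    simp [Matrix.add_apply, Matrix.smul_apply, Matrix.one_apply_ne h, hJ, hA]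
  have hMentry : ∀ a b, (M * M) a b = ∑ p, M p a * M p b := by
    intro a b
    rw [Matrix.mul_apply]
    apply Finset.sum_congr rfl
    intro p _
    congr 1
    conv_lhs => rw [← hMsymm]
    rfl
  have hdist2 : ∀ i j, dist (srgCol G s i) (srgCol G s j) ^ 2
      = (M * M) i i + (M * M) j j - 2 * (M * M) i j := by
    intro i j
    rw [EuclideanSpace.dist_eq, Real.sq_sqrt (by positivity)]
    have hterm : ∀ p (_ : p ∈ Finset.univ),
        dist (srgCol G s i p) (srgCol G s j p) ^ 2
          = M p i * M p i + M p j * M p j - 2 * (M p i * M p j) := by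
      intro p _
      rw [Real.dist_eq, sq_abs, happ, happ]
      ring
    rw [Finset.sum_congr rfl hterm, hMentry, hMentry, hMentry]
    rw [Finset.sum_sub_distrib, Finset.sum_add_distrib, ← Finset.mul_sum]
  have hdist_nonadj : ∀ i j, i ≠ j → ¬G.Adj i j →
      dist (srgCol G s i) (srgCol G s j) = dn := by
    intro i j hne hna
    have h1 : dist (srgCol G s i) (srgCol G s j) ^ 2 = dn ^ 2 := by
      rw [hdist2, hMMii, hMMii, hMMij i j hne, hdn2]
      simp [hna]
      ring
    rw [← Real.sqrt_sq dist_nonneg, h1, Real.sqrt_sq hdnpos.le]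
  have hdist_le : ∀ i j, dist (srgCol G s i) (srgCol G s j) ≤ dn := by
    intro i j
    rcases eq_or_ne i j with rfl | hne
    · simp [hdnpos.le]
    · have h1 : dist (srgCol G s i) (srgCol G s j) ^ 2 ≤ dn ^ 2 := by
        rw [hdist2, hMMii, hMMii, hMMij i j hne, hdn2]
        by_cases ha : G.Adj i j <;> simp [ha] <;> nlinarith [hdpos]
      rw [← Real.sqrt_sq dist_nonneg, ← Real.sqrt_sq hdnpos.le]
      exact Real.sqrt_le_sqrt h1
  have hdiam : Metric.diam (Set.range (srgCol G s)) = dn := by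
    apply le_antisymm
    · apply Metric.diam_le_of_forall_dist_le hdnpos.le
      rintro x ⟨i, rfl⟩ y ⟨j, rfl⟩
      exact hdist_le i j
    · rw [← hdist_nonadj i1 j1 hne1 hna1]
      exact Metric.dist_le_diam_of_mem ((Set.finite_range _).isBounded) ⟨i1, rfl⟩ ⟨j1, rfl⟩
  refine ⟨hpart1, ?_⟩
  rintro ⟨F, hFU, hFd⟩
  apply hcl
  refine ⟨fun a => srgCol G s ⁻¹' F a, ?_, ?_⟩
  · ext x
    simp only [Set.mem_univ, true_iff, Set.mem_iUnion, Set.mem_preimage]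
    have : srgCol G s x ∈ ⋃ a, F a := hFU ▸ Set.mem_range_self x
    exact Set.mem_iUnion.mp this
  · intro a i hi j hj hij
    by_contra hna
    have h1 : dist (srgCol G s i) (srgCol G s j) = dn := hdist_nonadj i j hij hna
    have hFa_sub : F a ⊆ Set.range (srgCol G s) := by
      rw [hFU]
      exact Set.subset_iUnion F a
    have hbd : Bornology.IsBounded (F a) := ((Set.finite_range _).subset hFa_sub).isBounded
    have h2 := Metric.dist_le_diam_of_mem hbd hi hj
    rw [h1] at h2
    have h3 := hFd a
    rw [hdiam] at h3
    linarith
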